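/- For any nonempty string T, the ratio el(T)/er(T) is at most σ, where σ is the number of distinct letters occurring in T, and el(T), er(T) denote the total number of left and right extensions of maximal repeats of T, respectively. Equivalently, el(T) ≤ σ · er(T). -/

import Mathlib

open Finset

variable {α : Type*}

/-- Number of occurrences of `S` in `T`: positions `i` with `T[i..i+|S|-1] = S`. -/
def occ [DecidableEq α] (T S : List α) : ℕ :=
  ((Finset.range (T.length + 1)).filter fun i => (T.drop i).take S.length = S).card

/-- `S` is a maximal repeat of `T`. -/
def MaxRepeat [DecidableEq α] (T S : List α) : Prop :=
  2 ≤ occ T S ∧ ∀ a : α, occ T (a :: S) < occ T S ∧ occ T (S ++ [a]) < occ T S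

instance [DecidableEq α] [Fintype α] (T S : List α) : Decidable (MaxRepeat T S) := by
  unfold MaxRepeat; infer_instance

/-- The finite set of maximal repeats of `T`. -/
def MRset [DecidableEq α] [Fintype α] (T : List α) : Finset (List α) :=
  (T.tails.flatMap List.inits).toFinset.filter fun S => MaxRepeat T S

/-- Number of right extensions of `S` in `T`. -/
def rext [DecidableEq α] [Fintype α] (T S : List α) : ℕ :=
  (Finset.univ.filter fun a : α => (S ++ [a]) <:+: T).card

/-- Number of left extensions of `S` in `T`. -/
def lext [DecidableEq α] [Fintype α] (T S : List α) : ℕ :=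
  (Finset.univ.filter fun a : α => (a :: S) <:+: T).card

/-- Total number of right extensions of maximal repeats of `T`. -/
def er [DecidableEq α] [Fintype α] (T : List α) : ℕ := ∑ S ∈ MRset T, rext T S

/-- Total number of left extensions of maximal repeats of `T`. -/
def el [DecidableEq α] [Fintype α] (T : List α) : ℕ := ∑ S ∈ MRset T, lext T S

lemma exists_right_ext' [DecidableEq α] {T S : List α} {i j : ℕ}
    (hij : i < j) (hjr : j < T.length + 1)
    (hi : (T.drop i).take S.length = S) (hj : (T.drop j).take S.length = S) :
    ∃ a, (S ++ [a]) <:+: T := by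
  have hmin : min S.length (T.length - j) = S.length := by
    have := congrArg List.length hj
    simpa [List.length_take, List.length_drop] using this
  have hlt : i + S.length < T.length := by omega
  have hlt2 : S.length < (T.drop i).length := by
    rw [List.length_drop]; omega
  refine ⟨(T.drop i).get ⟨S.length, hlt2⟩, ?_⟩
  have h1 : (T.drop i).take (S.length + 1) = S ++ [(T.drop i).get ⟨S.length, hlt2⟩] := by
    have h2 := (List.take_concat_get hlt2).symm
    rw [List.concat_eq_append, hi] at h2
    exact h2
  rw [← h1]
  exact (List.take_prefix _ _).isInfix.trans (List.drop_suffix i T).isInfix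

lemma lext_le_card [DecidableEq α] [Fintype α] (T S : List α) :
    lext T S ≤ T.toFinset.card := by
  apply Finset.card_le_card
  intro a ha
  rw [Finset.mem_filter] at ha
  rw [List.mem_toFinset]
  exact ha.2.sublist.subset List.mem_cons_self

lemma one_le_rext [DecidableEq α] [Fintype α] {T S : List α} (h2 : 2 ≤ occ T S) :
    1 ≤ rext T S := by
  rw [rext, Nat.succ_le_iff, Finset.card_pos]
  rw [occ, Nat.succ_le_iff, Finset.one_lt_card] at h2
  obtain ⟨i, hi, j, hj, hij⟩ := h2
  simp only [Finset.mem_filter, Finset.mem_range] at hi hj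
  have : ∃ a, (S ++ [a]) <:+: T := by
    rcases hij.lt_or_gt with hlt | hlt
    · exact exists_right_ext' hlt hj.1 hi.2 hj.2
    · exact exists_right_ext' hlt hi.1 hj.2 hi.2
  obtain ⟨a, ha⟩ := this
  exact ⟨a, Finset.mem_filter.mpr ⟨Finset.mem_univ a, ha⟩⟩

/-- `el(T) ≤ σ · er(T)` where `σ` is the number of distinct letters of `T`. -/
theorem el_le_sigma_mul_er [DecidableEq α] [Fintype α] (T : List α) (h : T ≠ []) :
    el T ≤ T.toFinset.card * er T := by
  rw [el, er, Finset.mul_sum]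
  apply Finset.sum_le_sum
  intro S hS
  rw [MRset, Finset.mem_filter] at hS
  calc lext T S ≤ T.toFinset.card * 1 := by simpa using lext_le_card T S
    _ ≤ T.toFinset.card * rext T S := Nat.mul_le_mul_left _ (one_le_rext hS.2.1)
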